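/- Let (Ω, 𝒜, P) be a probability space, X, Y : Ω → ℝ random variables, and φ : [−1,1] → ℝ convex with φ(0) = 0. If Y = f(X) holds P-almost surely for some Borel measurable f : ℝ → ℝ, then ∫_{ℝ×ℝ} ∫_ℝ φ(F_{Y|X=x₁}(y) − F_{Y|X=x₂}(y)) dP^Y(y) d(P^X ⊗ P^X)(x₁,x₂) = ∫_{ℝ×ℝ} ∫_ℝ φ(𝟙_{\{y₁ ≤ y\}} − 𝟙_{\{y₂ ≤ y\}}) dP^Y(y) d(P^Y ⊗ P^Y)(y₁,y₂). -/

import Mathlib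

open MeasureTheory ProbabilityTheory Filter Set
open scoped ENNReal Topology

/-- If Y = f(X) almost surely, the sensitivity functional of
conditional distribution functions equals the normalizing integral. -/
theorem stmt6 {Ω : Type*} [MeasurableSpace Ω] (P : Measure Ω) [IsProbabilityMeasure P]
    (X Y : Ω → ℝ) (hX : Measurable X) (hY : Measurable Y)
    (κ : Kernel ℝ ℝ) [IsMarkovKernel κ]
    (hκ : ∀ A B : Set ℝ, MeasurableSet A → MeasurableSet B →
      P.map (fun ω => (X ω, Y ω)) (A ×ˢ B) = ∫⁻ x in A, κ x B ∂(P.map X))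
    (φ : ℝ → ℝ) (hφ : ConvexOn ℝ (Set.Icc (-1 : ℝ) 1) φ) (hφ0 : φ 0 = 0)
    (f : ℝ → ℝ) (hf : Measurable f) (hYf : ∀ᵐ ω ∂P, Y ω = f (X ω)) :
    ∫ x : ℝ × ℝ, (∫ y, φ ((κ x.1 (Set.Iic y)).toReal - (κ x.2 (Set.Iic y)).toReal)
            ∂(P.map Y)) ∂((P.map X).prod (P.map X)) =
      ∫ p : ℝ × ℝ, (∫ y, φ ((if p.1 ≤ y then (1 : ℝ) else 0) - (if p.2 ≤ y then (1 : ℝ) else 0))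
            ∂(P.map Y)) ∂((P.map Y).prod (P.map Y)) := by
  set PX := P.map X with hPXdef
  set PY := P.map Y with hPYdef
  have hPXprob : IsProbabilityMeasure PX := Measure.isProbabilityMeasure_map hX.aemeasurable
  have hPYprob : IsProbabilityMeasure PY := Measure.isProbabilityMeasure_map hY.aemeasurable
  -- the joint law is the pushforward of PX under x ↦ (x, f x)
  have hxf : Measurable fun x : ℝ => (x, f x) := measurable_id.prodMk hf
  have hmap : P.map (fun ω => (X ω, Y ω)) = PX.map (fun x => (x, f x)) := by
    rw [hPXdef, Measure.map_map hxf hX]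
    exact Measure.map_congr (hYf.mono fun ω h => by simp [Function.comp, h])
  -- for each rational q, κ x (Iic q) = dirac (f x) (Iic q) a.e.
  have hq : ∀ q : ℚ, ∀ᵐ x ∂PX, κ x (Set.Iic (q : ℝ)) = Measure.dirac (f x) (Set.Iic (q : ℝ)) := by
    intro q
    have hmeas1 : Measurable fun x => κ x (Set.Iic (q : ℝ)) :=
      Kernel.measurable_coe κ measurableSet_Iic
    have hind : ∀ x : ℝ, Measure.dirac (f x) (Set.Iic (q : ℝ))
        = (f ⁻¹' Set.Iic (q : ℝ)).indicator (fun _ => (1 : ℝ≥0∞)) x := by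
      intro x
      rw [Measure.dirac_apply' _ measurableSet_Iic]
      by_cases h : f x ≤ (q : ℝ) <;> simp [Set.indicator, h]
    have hmeas2 : Measurable fun x => Measure.dirac (f x) (Set.Iic (q : ℝ)) := by
      simp only [hind]
      exact Measurable.indicator measurable_const (hf measurableSet_Iic)
    refine ae_eq_of_forall_setLIntegral_eq_of_sigmaFinite hmeas1 hmeas2 fun A hA _ => ?_
    rw [← hκ A _ hA measurableSet_Iic, hmap,
      Measure.map_apply hxf (hA.prod measurableSet_Iic)]
    have hpre : (fun x => (x, f x)) ⁻¹' (A ×ˢ Set.Iic (q : ℝ))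
        = A ∩ f ⁻¹' Set.Iic (q : ℝ) := by
      ext x; simp [Set.mem_prod, and_comm]
    rw [hpre]
    simp only [hind]
    simp [lintegral_indicator (hf measurableSet_Iic),
      Measure.restrict_restrict (hf measurableSet_Iic), Set.inter_comm]
  -- combine over all rationals: κ x = dirac (f x) a.e.
  have key : ∀ᵐ x ∂PX, κ x = Measure.dirac (f x) := by
    rw [← ae_all_iff] at hq
    filter_upwards [hq] with x hx
    refine ext_of_generate_finite _
      (BorelSpace.measurable_eq.trans Real.borel_eq_generateFrom_Iic_rat)
      Real.isPiSystem_Iic_rat ?_ (by simp)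
    rintro s hs
    rw [Set.mem_iUnion] at hs
    obtain ⟨r, hr⟩ := hs
    rw [Set.mem_singleton_iff] at hr
    subst hr
    exact hx r
  -- PY is the pushforward of PX under f
  have hPY : PY = PX.map f := by
    rw [hPYdef, hPXdef, Measure.map_map hf hX]
    exact Measure.map_congr (hYf.mono fun ω h => by simp [Function.comp, h])
  -- the measurable version of the inner integrand
  set H : (ℝ × ℝ) × ℝ → ℝ := fun z =>
    if z.1.1 ≤ z.2 then (if z.1.2 ≤ z.2 then 0 else φ 1)
    else (if z.1.2 ≤ z.2 then φ (-1) else 0) with hHdef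
  have hHeq : ∀ (p : ℝ × ℝ) (y : ℝ),
      φ ((if p.1 ≤ y then (1 : ℝ) else 0) - (if p.2 ≤ y then (1 : ℝ) else 0)) = H (p, y) := by
    intro p y
    simp only [hHdef]
    split_ifs <;> norm_num [hφ0]
  have hHmeas : Measurable H := by
    refine Measurable.ite (measurableSet_le (measurable_fst.fst) measurable_snd) ?_ ?_ <;>
      exact Measurable.ite (measurableSet_le (measurable_fst.snd) measurable_snd)
        measurable_const measurable_const
  set g : ℝ × ℝ → ℝ := fun p => ∫ y, H (p, y) ∂PY with hgdef
  have hg : StronglyMeasurable g := hHmeas.stronglyMeasurable.integral_prod_right'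
  -- a.e. statements on the product
  have hfst : (PX.prod PX).map Prod.fst = PX := by simp
  have hsnd : (PX.prod PX).map Prod.snd = PX := by simp
  have h1 : ∀ᵐ z ∂(PX.prod PX), κ z.1 = Measure.dirac (f z.1) :=
    ae_of_ae_map measurable_fst.aemeasurable (hfst ▸ key)
  have h2 : ∀ᵐ z ∂(PX.prod PX), κ z.2 = Measure.dirac (f z.2) :=
    ae_of_ae_map measurable_snd.aemeasurable (hsnd ▸ key)
  have hLHS : (∫ x : ℝ × ℝ, (∫ y, φ ((κ x.1 (Set.Iic y)).toReal - (κ x.2 (Set.Iic y)).toReal)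
      ∂PY) ∂(PX.prod PX)) = ∫ z : ℝ × ℝ, g (f z.1, f z.2) ∂(PX.prod PX) := by
    refine integral_congr_ae ?_
    filter_upwards [h1, h2] with z e1 e2
    refine integral_congr_ae (ae_of_all _ fun y => ?_)
    simp only [e1, e2, Measure.dirac_apply' _ measurableSet_Iic,
      hHdef, Set.indicator_apply, Set.mem_Iic, Pi.one_apply]
    split_ifs <;> norm_num [hφ0]
  have hRHS : (∫ p : ℝ × ℝ, (∫ y, φ ((if p.1 ≤ y then (1 : ℝ) else 0)
      - (if p.2 ≤ y then (1 : ℝ) else 0)) ∂PY) ∂(PY.prod PY))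
      = ∫ p : ℝ × ℝ, g p ∂(PY.prod PY) := by
    refine integral_congr_ae (ae_of_all _ fun p => ?_)
    exact integral_congr_ae (ae_of_all _ fun y => hHeq p y)
  rw [hLHS, hRHS, hPY, Measure.map_prod_map _ _ hf hf,
    integral_map (hf.prodMap hf).aemeasurable hg.aestronglyMeasurable]
  rfl
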